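/- Let n ≥ 1 and let λ : Fin n → ℝ with λ_i > 0 for all i, and set φ₀(z) := Σ_i λ_i |z_i|² for z ∈ ℂⁿ. Then for every entire function f : ℂⁿ → ℂ (holomorphic on all of ℂⁿ), |f(0)|² ≤ π^{−n} (Π_i λ_i) · ∫_{ℂⁿ} |f(w)|² e^{−φ₀(w)} dV(w), where dV is Lebesgue measure on ℂⁿ ≅ ℝ^{2n} and the integral may be infinite. -/

import Mathlib

open MeasureTheory

section Aux

open MeasureTheory Real Set
open scoped ENNReal

noncomputable section

lemma lintegral_comp_polarCoord_symm_real (g : ℝ × ℝ → ℝ≥0∞) :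
    ∫⁻ p in polarCoord.target, ENNReal.ofReal p.1 * g (polarCoord.symm p) = ∫⁻ p, g p := by
  set B : ℝ × ℝ → ℝ × ℝ →L[ℝ] ℝ × ℝ := fun p =>
    LinearMap.toContinuousLinearMap (Matrix.toLin (Module.Basis.finTwoProd ℝ) (Module.Basis.finTwoProd ℝ)
      !![Real.cos p.2, -p.1 * Real.sin p.2; Real.sin p.2, p.1 * Real.cos p.2])
  have A : ∀ p ∈ polarCoord.target, HasFDerivWithinAt polarCoord.symm (B p) polarCoord.target p :=
    fun p _ => (hasFDerivAt_polarCoord_symm p).hasFDerivWithinAt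
  have B_det : ∀ p, (B p).det = p.1 := by
    intro p
    conv_rhs => rw [← one_mul p.1, ← cos_sq_add_sin_sq p.2]
    simp only [B, neg_mul, LinearMap.det_toContinuousLinearMap, LinearMap.det_toLin,
      Matrix.det_fin_two_of, sub_neg_eq_add]
    ring
  have hinj : Set.InjOn polarCoord.symm polarCoord.target := by
    have := polarCoord.symm.injOn
    rwa [OpenPartialHomeomorph.symm_source] at this
  have himg : polarCoord.symm '' polarCoord.target = polarCoord.source :=
    polarCoord.symm_image_target_eq_source
  symm
  calc
    ∫⁻ p, g p = ∫⁻ p in polarCoord.source, g p := by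
      rw [← setLIntegral_univ]
      exact setLIntegral_congr polarCoord_source_ae_eq_univ.symm
    _ = ∫⁻ p in polarCoord.target, ENNReal.ofReal |(B p).det| * g (polarCoord.symm p) := by
      rw [← himg]
      exact lintegral_image_eq_lintegral_abs_det_fderiv_mul volume
        polarCoord.open_target.measurableSet A hinj g
    _ = ∫⁻ p in polarCoord.target, ENNReal.ofReal p.1 * g (polarCoord.symm p) := by
      refine setLIntegral_congr_fun polarCoord.open_target.measurableSet
        (fun p hp => ?_)
      rw [B_det, abs_of_pos hp.1]

lemma lintegral_comp_polarCoord_symm' (g : ℂ → ℝ≥0∞) :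
    ∫⁻ p in polarCoord.target, ENNReal.ofReal p.1 * g (Complex.polarCoord.symm p) = ∫⁻ z, g z := by
  have h := Complex.volume_preserving_equiv_real_prod.symm
  rw [h.lintegral_map_equiv, ← lintegral_comp_polarCoord_symm_real]
  rfl

lemma integral_circleMap_eq (g : ℂ → ℂ) (hg : Differentiable ℂ g) {r : ℝ} (hr : 0 < r) :
    ∫ θ in (0:ℝ)..(2*π), g (circleMap 0 r θ) = ((2*π : ℝ) : ℂ) * g 0 := by
  have hd : DiffContOnCl ℂ g (Metric.ball 0 r) := hg.diffContOnCl
  have h := hd.circleIntegral_sub_inv_smul (w := 0) (Metric.mem_ball_self hr)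
  simp only [sub_zero, circleIntegral, deriv_circleMap, smul_eq_mul] at h
  have key : ∀ θ ∈ Set.uIcc (0:ℝ) (2*π),
      circleMap 0 r θ * Complex.I * ((circleMap 0 r θ)⁻¹ * g (circleMap 0 r θ))
      = Complex.I * g (circleMap 0 r θ) := by
    intro θ _
    have hz : circleMap 0 r θ ≠ 0 := circleMap_ne_center hr.ne'
    field_simp
  rw [intervalIntegral.integral_congr key, intervalIntegral.integral_const_mul] at h
  have h2 : (2 * ↑π * Complex.I) * g 0 = Complex.I * (((2*π : ℝ) : ℂ) * g 0) := by
    push_cast; ring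
  rw [h2] at h
  exact mul_left_cancel₀ Complex.I_ne_zero h

lemma circle_sq_bound (g : ℂ → ℂ) (hg : Differentiable ℂ g) {r : ℝ} (hr : 0 < r) :
    2*π*‖g 0‖^2 ≤ ∫ θ in (0:ℝ)..(2*π), ‖g (circleMap 0 r θ)‖^2 := by
  have h := integral_circleMap_eq (fun z => g z * g z) (hg.mul hg) hr
  have h1 : 2*π*‖g 0‖^2 = ‖∫ θ in (0:ℝ)..(2*π), g (circleMap 0 r θ) * g (circleMap 0 r θ)‖ := by
    rw [h, norm_mul, Complex.norm_real, Real.norm_eq_abs, abs_of_pos Real.two_pi_pos, norm_mul]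
    ring
  rw [h1]
  have h2 := intervalIntegral.norm_integral_le_integral_norm
    (f := fun θ => g (circleMap 0 r θ) * g (circleMap 0 r θ)) (μ := volume)
    (a := 0) (b := 2*π) (by positivity)
  refine h2.trans (le_of_eq (intervalIntegral.integral_congr fun θ _ => ?_))
  rw [norm_mul]; ring

lemma circle_lintegral_bound (g : ℂ → ℂ) (hg : Differentiable ℂ g) {r : ℝ} (hr : 0 < r) :
    ENNReal.ofReal (2*π*‖g 0‖^2)
      ≤ ∫⁻ θ in Ioo (-π) π, ENNReal.ofReal (‖g (circleMap 0 r θ)‖^2) := by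
  have hcont : Continuous fun θ : ℝ => ‖g (circleMap 0 r θ)‖^2 :=
    ((hg.continuous.comp (continuous_circleMap 0 r)).norm.pow 2)
  have per : Function.Periodic (fun θ => ‖g (circleMap 0 r θ)‖^2) (2*π) := fun θ => by
    simp [periodic_circleMap 0 r θ]
  have hshift : ∫ θ in (0:ℝ)..(2*π), ‖g (circleMap 0 r θ)‖^2
      = ∫ θ in (-π)..π, ‖g (circleMap 0 r θ)‖^2 := by
    have h := per.intervalIntegral_add_eq 0 (-π)
    rwa [zero_add, (by ring : -π + 2*π = π)] at h
  have hint : IntegrableOn (fun θ : ℝ => ‖g (circleMap 0 r θ)‖^2) (Ioc (-π) π) volume :=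
    (hcont.intervalIntegrable (-π) π).1
  have h1 : ENNReal.ofReal (∫ θ in (-π)..π, ‖g (circleMap 0 r θ)‖^2)
      = ∫⁻ θ in Ioo (-π) π, ENNReal.ofReal (‖g (circleMap 0 r θ)‖^2) := by
    rw [intervalIntegral.integral_of_le (by linarith [Real.pi_pos]),
      ofReal_integral_eq_lintegral_ofReal hint
        (Filter.Eventually.of_forall fun θ => by positivity)]
    exact (setLIntegral_congr Ioo_ae_eq_Ioc).symm
  calc ENNReal.ofReal (2*π*‖g 0‖^2)
      ≤ ENNReal.ofReal (∫ θ in (0:ℝ)..(2*π), ‖g (circleMap 0 r θ)‖^2) :=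
        ENNReal.ofReal_le_ofReal (circle_sq_bound g hg hr)
    _ = _ := by rw [hshift, h1]

lemma radial_integral {lam : ℝ} (hlam : 0 < lam) :
    ∫⁻ r in Ioi (0:ℝ), ENNReal.ofReal (r * Real.exp (-(lam * r^2)))
      = ENNReal.ofReal (1 / (2*lam)) := by
  have hint : IntegrableOn (fun r : ℝ => r * Real.exp (-lam * r^2)) (Ioi 0) volume :=
    (integrable_mul_exp_neg_mul_sq hlam).integrableOn
  have hderiv : ∀ x ∈ Ici (0:ℝ),
      HasDerivAt (fun r : ℝ => -(2*lam)⁻¹ * Real.exp (-lam * r^2))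
        (x * Real.exp (-lam * x^2)) x := by
    intro x _
    convert ((hasDerivAt_pow 2 x).const_mul (-lam)).exp.const_mul (-(2*lam)⁻¹) using 1
    · rfl
    · rfl
    field_simp
    ring
  have htend : Filter.Tendsto (fun r : ℝ => -(2*lam)⁻¹ * Real.exp (-lam * r^2))
      Filter.atTop (nhds (-(2*lam)⁻¹ * 0)) := by
    refine Filter.Tendsto.const_mul _ ?_
    exact Real.tendsto_exp_atBot.comp
      ((Filter.tendsto_pow_atTop two_ne_zero).const_mul_atTop_of_neg (neg_lt_zero.2 hlam))
  have hval : ∫ r in Ioi (0:ℝ), r * Real.exp (-lam * r^2) = 1 / (2*lam) := by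
    rw [MeasureTheory.integral_Ioi_of_hasDerivAt_of_tendsto' hderiv hint htend]
    simp
  rw [← hval, ofReal_integral_eq_lintegral_ofReal hint
    ((ae_restrict_iff' measurableSet_Ioi).2 (Filter.Eventually.of_forall fun r hr => by
      have : (0:ℝ) < r := hr
      positivity))]
  refine lintegral_congr fun r => ?_
  rw [neg_mul]

lemma continuous_circleMap_prod :
    Continuous fun p : ℝ × ℝ => circleMap 0 p.1 p.2 := by
  simp only [circleMap, zero_add]
  exact ((Complex.continuous_ofReal.comp continuous_fst).mul
    (Complex.continuous_exp.comp ((Complex.continuous_ofReal.comp continuous_snd).mul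
      continuous_const)))

lemma polarCoord_symm_eq_circleMap (p : ℝ × ℝ) :
    (Complex.polarCoord.symm p : ℂ) = circleMap 0 p.1 p.2 := by
  rw [Complex.polarCoord_symm_apply, circleMap_zero, Complex.exp_mul_I]
  push_cast
  ring

lemma dim1 {lam : ℝ} (hlam : 0 < lam) (g : ℂ → ℂ) (hg : Differentiable ℂ g) :
    ENNReal.ofReal (‖g 0‖^2)
      ≤ ENNReal.ofReal (lam / π) *
          ∫⁻ z, ENNReal.ofReal (‖g z‖^2 * Real.exp (-(lam * ‖z‖^2))) := by
  set G : ℂ → ℝ≥0∞ := fun z => ENNReal.ofReal (‖g z‖^2 * Real.exp (-(lam * ‖z‖^2))) with hG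
  have hmeas : Measurable fun p : ℝ × ℝ =>
      ENNReal.ofReal (p.1 * Real.exp (-(lam * p.1^2))) *
        ENNReal.ofReal (‖g (circleMap 0 p.1 p.2)‖^2) := by
    apply Measurable.mul (f := fun p : ℝ × ℝ => ENNReal.ofReal (p.1 * Real.exp (-(lam * p.1^2)))) (g := fun p : ℝ × ℝ => ENNReal.ofReal (‖g (circleMap 0 p.1 p.2)‖^2))
    · exact (ENNReal.continuous_ofReal.comp ((continuous_fst.mul
        ((continuous_const.mul (continuous_fst.pow 2)).neg.rexp)))).measurable
    · exact (ENNReal.continuous_ofReal.comp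
        (((hg.continuous.comp continuous_circleMap_prod).norm.pow 2))).measurable
  have key : ENNReal.ofReal (1/(2*lam)) * ENNReal.ofReal (2*π*‖g 0‖^2) ≤ ∫⁻ z, G z := by
    rw [← lintegral_comp_polarCoord_symm' G, polarCoord_target]
    have hrw : ∀ p : ℝ × ℝ, p ∈ Ioi (0:ℝ) ×ˢ Ioo (-π) π →
        ENNReal.ofReal p.1 * G (Complex.polarCoord.symm p)
          = ENNReal.ofReal (p.1 * Real.exp (-(lam * p.1^2))) *
              ENNReal.ofReal (‖g (circleMap 0 p.1 p.2)‖^2) := by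
      rintro ⟨r, θ⟩ ⟨hr, -⟩
      simp only [hG, polarCoord_symm_eq_circleMap]
      have hr' : (0:ℝ) < r := hr
      rw [show ‖circleMap 0 r θ‖^2 = r^2 by
        rw [norm_circleMap_zero, sq_abs]]
      rw [← ENNReal.ofReal_mul hr'.le,
        ← ENNReal.ofReal_mul (by positivity : (0:ℝ) ≤ r * Real.exp (-(lam * r^2)))]
      congr 1
      ring
    rw [setLIntegral_congr_fun (measurableSet_Ioi.prod measurableSet_Ioo)
      hrw]
    rw [Measure.volume_eq_prod, ← Measure.prod_restrict]
    rw [lintegral_prod _ hmeas.aemeasurable]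
    calc ENNReal.ofReal (1/(2*lam)) * ENNReal.ofReal (2*π*‖g 0‖^2)
        = ∫⁻ r in Ioi (0:ℝ), ENNReal.ofReal (r * Real.exp (-(lam * r^2)))
            * ENNReal.ofReal (2*π*‖g 0‖^2) := by
          rw [lintegral_mul_const' _ _ (by simp), radial_integral hlam]
      _ ≤ _ := by
          refine setLIntegral_mono' measurableSet_Ioi fun r hr => ?_
          have hm : Measurable fun θ : ℝ => ENNReal.ofReal (‖g (circleMap 0 r θ)‖^2) := by
            exact ((hg.continuous.comp (continuous_circleMap 0 r)).norm.pow 2).measurable.ennreal_ofReal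
          show _ ≤ ∫⁻ y in Ioo (-π) π, ENNReal.ofReal (r * Real.exp (-(lam * r^2))) *
            ENNReal.ofReal (‖g (circleMap 0 r y)‖^2) ∂volume
          rw [lintegral_const_mul'' _ hm.aemeasurable]
          exact mul_le_mul_right (circle_lintegral_bound g hg hr) _
  calc ENNReal.ofReal (‖g 0‖^2)
      = ENNReal.ofReal (lam/π) * (ENNReal.ofReal (1/(2*lam)) * ENNReal.ofReal (2*π*‖g 0‖^2)) := by
        rw [← ENNReal.ofReal_mul (by positivity), ← ENNReal.ofReal_mul (by positivity)]
        congr 1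
        field_simp
    _ ≤ _ := mul_le_mul_right key _

variable {n : ℕ}

lemma cons_cont : Continuous fun p : ℂ × (Fin n → ℂ) => (Fin.cons p.1 p.2 : Fin (n+1) → ℂ) := by
  apply continuous_pi
  intro k
  refine Fin.cases ?_ ?_ k
  · simpa using continuous_fst
  · intro j
    refine ((continuous_apply j).comp continuous_snd).congr fun p => ?_; simp

lemma cons_diff_left (w' : Fin n → ℂ) :
    Differentiable ℂ fun z : ℂ => (Fin.cons z w' : Fin (n+1) → ℂ) := by
  rw [differentiable_pi]
  intro k
  refine Fin.cases ?_ ?_ k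
  · simpa using differentiable_id
  · intro j
    simpa using differentiable_const (w' j)

lemma cons_diff_right (z : ℂ) :
    Differentiable ℂ fun w' : Fin n → ℂ => (Fin.cons z w' : Fin (n+1) → ℂ) := by
  rw [differentiable_pi]
  intro k
  refine Fin.cases ?_ ?_ k
  · simpa using differentiable_const z
  · intro j
    simp only [Fin.cons_succ]
    exact differentiable_pi.mp differentiable_id j

lemma cons_zero_zero : (Fin.cons 0 0 : Fin (n+1) → ℂ) = 0 := by
  funext k
  refine Fin.cases ?_ ?_ k <;> simp

lemma sum_cons (lam : Fin (n+1) → ℝ) (z : ℂ) (w' : Fin n → ℂ) :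
    ∑ i, lam i * ‖(Fin.cons z w' : Fin (n+1) → ℂ) i‖^2
      = lam 0 * ‖z‖^2 + ∑ j, lam j.succ * ‖w' j‖^2 := by
  rw [Fin.sum_univ_succ]
  simp

lemma main_aux (n : ℕ) (lam : Fin n → ℝ) (hlam : ∀ i, 0 < lam i)
    (f : (Fin n → ℂ) → ℂ) (hf : Differentiable ℂ f) :
    ENNReal.ofReal (‖f 0‖ ^ 2)
      ≤ ENNReal.ofReal ((∏ i, lam i) / Real.pi ^ n) *
          ∫⁻ w, ENNReal.ofReal (‖f w‖ ^ 2 * Real.exp (-(∑ i, lam i * ‖w i‖ ^ 2))) ∂volume := by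
  induction n with
  | zero =>
    simp only [Finset.univ_eq_empty, Finset.prod_empty, Finset.sum_empty, pow_zero, neg_zero,
      Real.exp_zero, mul_one, div_one, ENNReal.ofReal_one, one_mul]
    rw [Measure.volume_pi_eq_dirac 0, lintegral_dirac' _ (f := fun w : Fin 0 → ℂ => ENNReal.ofReal (‖f w‖ ^ 2))
      ((hf.continuous.norm.pow 2).measurable.ennreal_ofReal)]
  | succ n ih =>
    set E : ℂ → ℝ := fun z => Real.exp (-(lam 0 * ‖z‖^2)) with hE
    set Φ : ℂ × (Fin n → ℂ) → ℝ≥0∞ := fun p =>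
      ENNReal.ofReal (‖f (Fin.cons p.1 p.2)‖^2 *
        Real.exp (-(∑ j, lam j.succ * ‖p.2 j‖^2))) with hΦ
    have hΦcont : Continuous Φ := by
      apply ENNReal.continuous_ofReal.comp
      apply Continuous.mul
      · exact (hf.continuous.comp cons_cont).norm.pow 2
      · apply Real.continuous_exp.comp
        apply Continuous.neg
        apply continuous_finset_sum
        intro j _
        exact continuous_const.mul (((continuous_apply j).comp continuous_snd).norm.pow 2)
    have hI : Measurable fun z : ℂ => ∫⁻ w', Φ (z, w') :=
      Measurable.lintegral_prod_right hΦcont.measurable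
    set g : ℂ → ℂ := fun z => f (Fin.cons z 0) with hgdef
    have hg : Differentiable ℂ g := hf.comp (cons_diff_left 0)
    -- Tonelli / change of variables
    have hA : (∫⁻ w : Fin (n+1) → ℂ,
          ENNReal.ofReal (‖f w‖ ^ 2 * Real.exp (-(∑ i, lam i * ‖w i‖ ^ 2))) ∂volume)
        = ∫⁻ z : ℂ, ENNReal.ofReal (E z) * ∫⁻ w', Φ (z, w') := by
      have hmp := MeasurePreserving.symm _
        (volume_preserving_piFinSuccAbove (fun _ : Fin (n+1) => ℂ) 0)
      rw [hmp.lintegral_map_equiv]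
      simp_rw [MeasurableEquiv.piFinSuccAbove_symm_apply, Fin.insertNthEquiv, Equiv.coe_fn_mk,
        Fin.insertNth_zero']
      have hmeas : Measurable fun p : ℂ × (Fin n → ℂ) =>
          ENNReal.ofReal (‖f (Fin.cons p.1 p.2)‖ ^ 2 *
            Real.exp (-(∑ i, lam i * ‖(Fin.cons p.1 p.2 : Fin (n+1) → ℂ) i‖ ^ 2))) := by
        apply Measurable.ennreal_ofReal
        apply Continuous.measurable
        apply Continuous.mul
        · exact (hf.continuous.comp cons_cont).norm.pow 2
        · apply Real.continuous_exp.comp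
          apply Continuous.neg
          apply continuous_finset_sum
          intro i _
          exact continuous_const.mul (((continuous_apply i).comp cons_cont).norm.pow 2)
      rw [Measure.volume_eq_prod, lintegral_prod _ hmeas.aemeasurable]
      refine lintegral_congr fun z => ?_
      have hm2 : Measurable fun w' : Fin n → ℂ => Φ (z, w') :=
        hΦcont.measurable.comp measurable_prodMk_left
      rw [← lintegral_const_mul'' _ hm2.aemeasurable]
      refine lintegral_congr fun w' => ?_
      rw [hΦ]
      simp only []
      rw [← ENNReal.ofReal_mul (by positivity : (0:ℝ) ≤ E z)]
      congr 1
      rw [sum_cons lam z w', neg_add, Real.exp_add, hE]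
      ring
    have hconst : ENNReal.ofReal ((∏ i, lam i) / Real.pi ^ (n+1))
        = ENNReal.ofReal (lam 0 / π) * ENNReal.ofReal ((∏ j : Fin n, lam j.succ) / Real.pi ^ n) := by
      rw [← ENNReal.ofReal_mul (div_nonneg (hlam 0).le Real.pi_pos.le)]
      congr 1
      rw [Fin.prod_univ_succ, pow_succ, div_mul_div_comm]
      ring
    have hg0 : g 0 = f 0 := by rw [hgdef]; simp only [cons_zero_zero]
    calc ENNReal.ofReal (‖f 0‖ ^ 2)
        = ENNReal.ofReal (‖g 0‖ ^ 2) := by rw [hg0]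
      _ ≤ ENNReal.ofReal (lam 0 / π) *
            ∫⁻ z, ENNReal.ofReal (‖g z‖^2 * Real.exp (-(lam 0 * ‖z‖^2))) := dim1 (hlam 0) g hg
      _ ≤ ENNReal.ofReal (lam 0 / π) *
            ∫⁻ z, ENNReal.ofReal (E z) *
              (ENNReal.ofReal ((∏ j : Fin n, lam j.succ) / Real.pi ^ n) * ∫⁻ w', Φ (z, w')) := by
          refine mul_le_mul_right (lintegral_mono fun z => ?_) _
          have h1 : ENNReal.ofReal (‖g z‖^2 * Real.exp (-(lam 0 * ‖z‖^2)))
              = ENNReal.ofReal (E z) * ENNReal.ofReal (‖g z‖^2) := by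
            rw [← ENNReal.ofReal_mul (by positivity : (0:ℝ) ≤ E z), hE]
            congr 1
            ring
          rw [h1]
          refine mul_le_mul_right ?_ _
          have := ih (fun j : Fin n => lam j.succ) (fun j => hlam j.succ)
            (fun w' => f (Fin.cons z w')) (hf.comp (cons_diff_right z))
          exact this
      _ = ENNReal.ofReal (lam 0 / π) * (ENNReal.ofReal ((∏ j : Fin n, lam j.succ) / Real.pi ^ n) *
            ∫⁻ z, ENNReal.ofReal (E z) * ∫⁻ w', Φ (z, w')) := by
          congr 1
          have hEc : Continuous E := by
            rw [hE]; fun_prop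
          have hEI : Measurable fun z : ℂ => ENNReal.ofReal (E z) * ∫⁻ w', Φ (z, w') :=
            hEc.measurable.ennreal_ofReal.mul hI
          rw [← lintegral_const_mul'' _ hEI.aemeasurable]
          refine lintegral_congr fun z => ?_
          ring
      _ = ENNReal.ofReal ((∏ i, lam i) / Real.pi ^ (n+1)) *
            ∫⁻ w, ENNReal.ofReal (‖f w‖ ^ 2 * Real.exp (-(∑ i, lam i * ‖w i‖ ^ 2))) ∂volume := by
          rw [hA, hconst]
          ring

end

/-- (Model pointwise bound with the sharp constant.) Let
`φ₀(z) = Σ_i λ_i |z_i|²` on `ℂⁿ` with all `λ_i > 0`. Then every entire function `f` on `ℂⁿ`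
satisfies `|f(0)|² ≤ π^{-n} (Π_i λ_i) ∫_{ℂⁿ} |f|² e^{-φ₀} dV` (the integral may be infinite). -/
theorem model_bergman_pointwise_bound
    {n : ℕ} (hn : 1 ≤ n) (lam : Fin n → ℝ) (hlam : ∀ i, 0 < lam i)
    (f : (Fin n → ℂ) → ℂ) (hf : Differentiable ℂ f) :
    ENNReal.ofReal (‖f 0‖ ^ 2)
      ≤ ENNReal.ofReal ((∏ i, lam i) / Real.pi ^ n) *
          ∫⁻ w, ENNReal.ofReal (‖f w‖ ^ 2 * Real.exp (-(∑ i, lam i * ‖w i‖ ^ 2))) ∂volume := by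
  exact main_aux n lam hlam f hf
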